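/- For 1 < p ∈ ℝ and G a finitely generated infinite group, the D_p-norm closure of Diff(D_p(G)/ℂ) (the linear span of {f_x − f | f ∈ D_p(G)/ℂ, x ∈ G}, where f_x(g) = f(gx⁻¹)) equals the D_p-norm closure of ℓ^p(G) in D_p(G)/ℂ. -/

import Mathlib

open Filter Topology

namespace PHB

variable {G : Type*} [Group G]

/-- One Dirichlet term `‖f(gs⁻¹) − f(g)‖^p`. -/
noncomputable def dpTerm (p : ℝ) (f : G → ℂ) (s g : G) : ℝ := ‖f (g * s⁻¹) - f g‖ ^ p

/-- Membership in `D_p(G)`. -/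
def MemDp (p : ℝ) (S : Finset G) (f : G → ℂ) : Prop :=
  ∀ s ∈ S, Summable (dpTerm p f s)

/-- The Dirichlet `p`-sum `∑_{s∈S}∑_{g∈G} ‖f(gs⁻¹) − f(g)‖^p`. -/
noncomputable def dirSum (p : ℝ) (S : Finset G) (f : G → ℂ) : ℝ :=
  ∑ s ∈ S, ∑' g, dpTerm p f s g

/-- The `D_p`-norm `(∑_{s,g}|f(gs⁻¹)−f(g)|^p + |f(e)|^p)^{1/p}`. -/
noncomputable def dpNorm (p : ℝ) (S : Finset G) (f : G → ℂ) : ℝ :=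
  (dirSum p S f + ‖f 1‖ ^ p) ^ (1/p)

/-- The norm on `D_p(G)/ℂ`: `(∑_{s,g}|f(gs⁻¹)−f(g)|^p)^{1/p}`. -/
noncomputable def qNorm (p : ℝ) (S : Finset G) (f : G → ℂ) : ℝ :=
  dirSum p S f ^ (1/p)

/-- Boundedness of a function. -/
def BddFun (f : G → ℂ) : Prop := ∃ M : ℝ, ∀ g, ‖f g‖ ≤ M

/-- The sup norm. -/
noncomputable def supNorm (f : G → ℂ) : ℝ := ⨆ g, ‖f g‖

/-- The `BD_p`-norm `‖f‖_∞ + (∑_{s,g}|f(gs⁻¹)−f(g)|^p)^{1/p}`. -/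
noncomputable def bdpNorm (p : ℝ) (S : Finset G) (f : G → ℂ) : ℝ :=
  supNorm f + dirSum p S f ^ (1/p)

/-- Membership in `BD_p(G)`: bounded and finite Dirichlet `p`-sum. -/
def MemBDp (p : ℝ) (S : Finset G) (f : G → ℂ) : Prop := BddFun f ∧ MemDp p S f

/-- Membership in `ℓ^p(G)`. -/
def MemLp' (p : ℝ) (f : G → ℂ) : Prop := Summable fun g => ‖f g‖ ^ p

/-- `f` lies in the `D_p`-closure of the finitely supported functions `ℂG`. -/
def InClosCG (p : ℝ) (S : Finset G) (f : G → ℂ) : Prop :=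
  MemDp p S f ∧ ∀ ε : ℝ, 0 < ε →
    ∃ h : G → ℂ, (Function.support h).Finite ∧ dpNorm p S (f - h) < ε

/-- `f` is a bounded function in the `D_p`-closure of `ℂG`. -/
def InBClosCG (p : ℝ) (S : Finset G) (f : G → ℂ) : Prop := BddFun f ∧ InClosCG p S f

/-- `f` lies in the `D_p`-closure of `ℓ^p(G)`. -/
def InClosLp (p : ℝ) (S : Finset G) (f : G → ℂ) : Prop :=
  MemDp p S f ∧ ∀ ε : ℝ, 0 < ε →
    ∃ h : G → ℂ, MemLp' p h ∧ dpNorm p S (f - h) < ε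

/-- `f` is a bounded function in the `D_p`-closure of `ℓ^p(G)`. -/
def InBClosLp (p : ℝ) (S : Finset G) (f : G → ℂ) : Prop := BddFun f ∧ InClosLp p S f

/-- `f` lies in the `D_p`-closure of `ℓ^p(G) ⊕ ℂ`. -/
def InClosLpC (p : ℝ) (S : Finset G) (f : G → ℂ) : Prop :=
  MemDp p S f ∧ ∀ ε : ℝ, 0 < ε →
    ∃ (h : G → ℂ) (c : ℂ), MemLp' p h ∧ dpNorm p S (f - h - Function.const G c) < ε

/-- A character (nonzero multiplicative linear functional) on `BD_p(G)`. -/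
structure BDpChar (p : ℝ) (S : Finset G) where
  toFun : {f : G → ℂ // MemBDp p S f} → ℂ
  map_add : ∀ (f h : {f : G → ℂ // MemBDp p S f}) (hm : MemBDp p S (f.1 + h.1)),
    toFun ⟨f.1 + h.1, hm⟩ = toFun f + toFun h
  map_mul : ∀ (f h : {f : G → ℂ // MemBDp p S f}) (hm : MemBDp p S (f.1 * h.1)),
    toFun ⟨f.1 * h.1, hm⟩ = toFun f * toFun h
  map_smul : ∀ (c : ℂ) (f : {f : G → ℂ // MemBDp p S f}) (hm : MemBDp p S (c • f.1)),
    toFun ⟨c • f.1, hm⟩ = c * toFun f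
  map_one : ∀ hm : MemBDp p S (1 : G → ℂ), toFun ⟨1, hm⟩ = 1

/-- The weak-* topology on the spectrum `Sp(BD_p(G))`. -/
noncomputable instance (p : ℝ) (S : Finset G) : TopologicalSpace (BDpChar p S) :=
  TopologicalSpace.induced BDpChar.toFun Pi.topologicalSpace

/-- The evaluation embedding `i : G → Sp(BD_p(G))`, `(i g)(f) = f(g)`. -/
def evalChar (p : ℝ) (S : Finset G) (g : G) : BDpChar p S where
  toFun := fun f => f.1 g
  map_add := fun _ _ _ => rfl
  map_mul := fun _ _ _ => rfl
  map_smul := fun _ _ _ => rfl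
  map_one := fun _ => rfl

/-- The `p`-Laplacian `Δ_p f(g) = ∑_{s∈S} |f(gs⁻¹)−f(g)|^{p−2}(f(gs⁻¹)−f(g))`. -/
noncomputable def pLap (p : ℝ) (S : Finset G) (f : G → ℂ) (g : G) : ℂ :=
  ∑ s ∈ S, ((‖f (g * s⁻¹) - f g‖ ^ (p - 2) : ℝ) : ℂ) * (f (g * s⁻¹) - f g)

/-- `f` is `p`-harmonic: `f ∈ D_p(G)` and `Δ_p f ≡ 0`. -/
def PHarmonic (p : ℝ) (S : Finset G) (f : G → ℂ) : Prop :=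
  MemDp p S f ∧ ∀ g, pLap p S f g = 0

/-- The `p`-harmonic boundary `∂_p(G) ⊆ Sp(BD_p(G)) \ G`. -/
def pBoundary (p : ℝ) (S : Finset G) : Set (BDpChar p S) :=
  {x | (∀ g : G, x ≠ evalChar p S g) ∧
    ∀ (f : G → ℂ) (hf : MemBDp p S f), InBClosCG p S f → x.toFun ⟨f, hf⟩ = 0}

/-- The word metric on `G` with respect to the generating set `S`. -/
noncomputable def wordDist (S : Finset G) (x y : G) : ℕ :=
  sInf {n | ∃ l : List G, (∀ a ∈ l, a ∈ S) ∧ l.length = n ∧ x⁻¹ * y = l.prod}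

/-- The word length `|g| = d(e,g)`. -/
noncomputable def wordLen (S : Finset G) (g : G) : ℕ := wordDist S 1 g

/-- Right translation `f_x(g) = f(gx⁻¹)`. -/
def translateFun (f : G → ℂ) (x : G) : G → ℂ := fun g => f (g * x⁻¹)

/-- `φ : G → H` is a rough isometry with constants `a, b, c` for the word metrics. -/
def RoughIsom {G H : Type*} [Group G] [Group H] (S : Finset G) (T : Finset H)
    (φ : G → H) (a b c : ℝ) : Prop :=
  1 ≤ a ∧ 0 ≤ b ∧ 0 < c ∧
  (∀ x y : G, (1/a) * (wordDist S x y : ℝ) - b ≤ (wordDist T (φ x) (φ y) : ℝ) ∧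
    (wordDist T (φ x) (φ y) : ℝ) ≤ a * (wordDist S x y : ℝ) + b) ∧
  ∀ h : H, ∃ x : G, (wordDist T (φ x) h : ℝ) < c

/-- `S` is a symmetric generating set of `G`. -/
def SymmGen (S : Finset G) : Prop :=
  (∀ s ∈ S, s⁻¹ ∈ S) ∧ Subgroup.closure (S : Set G) = ⊤

end PHB
namespace PHB

variable {G : Type*} [Group G]

/-- `f` lies in the closure (in the norm of `D_p(G)/ℂ`) of
`Diff(D_p(G)/ℂ) = span{f_x − f | f ∈ D_p(G), x ∈ G}`. -/
def InClosDiffQ (p : ℝ) (S : Finset G) (f : G → ℂ) : Prop :=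
  ∀ ε : ℝ, 0 < ε → ∃ (n : ℕ) (cc : Fin n → ℂ) (hs : Fin n → (G → ℂ)) (xs : Fin n → G),
    (∀ i, MemDp p S (hs i)) ∧
    qNorm p S (f - ∑ i, cc i • (translateFun (hs i) (xs i) - hs i)) < ε

/-- `f` lies in the closure of `ℓ^p(G)` in the norm of `D_p(G)/ℂ`. -/
def InClosLpQ (p : ℝ) (S : Finset G) (f : G → ℂ) : Prop :=
  ∀ ε : ℝ, 0 < ε → ∃ h : G → ℂ, MemLp' p h ∧ qNorm p S (f - h) < ε

end PHB

namespace PHB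

variable {G : Type*} [Group G]

/-! ### Basic summability lemmas -/

theorem summable_norm_add {ι : Type*} {p : ℝ} (hp : 1 ≤ p) {A B : ι → ℂ}
    (hA : Summable fun i => ‖A i‖ ^ p) (hB : Summable fun i => ‖B i‖ ^ p) :
    Summable fun i => ‖A i + B i‖ ^ p := by
  have h := (Real.Lp_add_le_tsum_of_nonneg hp (fun i => norm_nonneg (A i))
    (fun i => norm_nonneg (B i)) hA hB).1
  exact h.of_nonneg_of_le (fun i => Real.rpow_nonneg (norm_nonneg _) _)
    (fun i => Real.rpow_le_rpow (norm_nonneg _) (norm_add_le _ _) (by linarith))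

theorem tsum_norm_add_le {ι : Type*} {p : ℝ} (hp : 1 ≤ p) {A B : ι → ℂ}
    (hA : Summable fun i => ‖A i‖ ^ p) (hB : Summable fun i => ‖B i‖ ^ p) :
    (∑' i, ‖A i + B i‖ ^ p) ^ (1/p) ≤
      (∑' i, ‖A i‖ ^ p) ^ (1/p) + (∑' i, ‖B i‖ ^ p) ^ (1/p) := by
  have h := Real.Lp_add_le_tsum_of_nonneg hp (fun i => norm_nonneg (A i))
    (fun i => norm_nonneg (B i)) hA hB
  refine le_trans (Real.rpow_le_rpow ?_ ?_ ?_) h.2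
  · exact tsum_nonneg fun i => Real.rpow_nonneg (norm_nonneg _) _
  · exact Summable.tsum_le_tsum
      (fun i => Real.rpow_le_rpow (norm_nonneg _) (norm_add_le _ _) (by linarith))
      (summable_norm_add hp hA hB) h.1
  · exact one_div_nonneg.mpr (by linarith)

theorem summable_translate {F : G → ℝ} (hF : Summable F) (x : G) :
    Summable fun g => F (g * x) :=
  (Equiv.mulRight x).summable_iff.mpr hF

theorem tsum_translate (F : G → ℝ) (x : G) : ∑' g, F (g * x) = ∑' g, F g :=
  (Equiv.mulRight x).tsum_eq F

/-! ### `MemLp'` lemmas -/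

theorem memLp'_zero {p : ℝ} (hp : 0 < p) : MemLp' p (0 : G → ℂ) := by
  have : (fun g : G => ‖(0 : G → ℂ) g‖ ^ p) = fun _ => (0 : ℝ) := by
    funext g; simp [Real.zero_rpow hp.ne']
  rw [MemLp', this]; exact summable_zero

theorem MemLp'.add {p : ℝ} (hp : 1 ≤ p) {u v : G → ℂ} (hu : MemLp' p u) (hv : MemLp' p v) :
    MemLp' p (u + v) :=
  summable_norm_add hp hu hv

theorem MemLp'.neg {p : ℝ} {u : G → ℂ} (hu : MemLp' p u) : MemLp' p (-u) := by
  have : (fun g : G => ‖(-u) g‖ ^ p) = fun g => ‖u g‖ ^ p := by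
    funext g; simp
  rw [MemLp', this]; exact hu

theorem MemLp'.sub {p : ℝ} (hp : 1 ≤ p) {u v : G → ℂ} (hu : MemLp' p u) (hv : MemLp' p v) :
    MemLp' p (u - v) := by
  have := hu.add hp hv.neg
  rwa [← sub_eq_add_neg] at this

theorem MemLp'.smul {p : ℝ} {u : G → ℂ} (c : ℂ) (hu : MemLp' p u) : MemLp' p (c • u) := by
  have : (fun g : G => ‖(c • u) g‖ ^ p) = fun g => ‖c‖ ^ p * ‖u g‖ ^ p := by
    funext g
    rw [Pi.smul_apply, smul_eq_mul, norm_mul, Real.mul_rpow (norm_nonneg _) (norm_nonneg _)]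
  rw [MemLp', this]
  exact hu.mul_left _

theorem memLp'_sum {ι : Type*} {p : ℝ} (hp : 1 < p) (s : Finset ι) (F : ι → G → ℂ)
    (h : ∀ i ∈ s, MemLp' p (F i)) : MemLp' p (∑ i ∈ s, F i) := by
  classical
  induction s using Finset.induction with
  | empty => simpa using memLp'_zero (G := G) (lt_trans one_pos hp)
  | @insert a s ha ih =>
    rw [Finset.sum_insert ha]
    exact MemLp'.add hp.le (h a (Finset.mem_insert_self a s))
      (ih fun i hi => h i (Finset.mem_insert_of_mem hi))

/-! ### `MemDp` lemmas -/

theorem dpTerm_eq {p : ℝ} (f : G → ℂ) (s g : G) :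
    dpTerm p f s g = ‖f (g * s⁻¹) - f g‖ ^ p := rfl

theorem MemDp.of_lp {p : ℝ} (hp : 1 ≤ p) {S : Finset G} {h : G → ℂ} (hh : MemLp' p h) :
    MemDp p S h := by
  intro s _
  have h1 : Summable fun g => ‖h (g * s⁻¹)‖ ^ p := summable_translate hh s⁻¹
  have h2 : Summable fun g => ‖(-(h g) : ℂ)‖ ^ p := by
    have : (fun g : G => ‖(-(h g) : ℂ)‖ ^ p) = fun g => ‖h g‖ ^ p := by funext g; simp
    rw [this]; exact hh
  have := summable_norm_add hp h1 h2
  apply this.congr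
  intro g
  simp [dpTerm, sub_eq_add_neg]

theorem MemDp.add {p : ℝ} (hp : 1 ≤ p) {S : Finset G} {u v : G → ℂ}
    (hu : MemDp p S u) (hv : MemDp p S v) : MemDp p S (u + v) := by
  intro s hs
  have := summable_norm_add hp (hu s hs) (hv s hs)
  apply this.congr
  intro g
  simp only [dpTerm, Pi.add_apply]
  congr 2
  ring

theorem MemDp.neg {p : ℝ} {S : Finset G} {u : G → ℂ} (hu : MemDp p S u) : MemDp p S (-u) := by
  intro s hs
  apply (hu s hs).congr
  intro g
  simp only [dpTerm, Pi.neg_apply]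
  rw [show -u (g * s⁻¹) - -u g = -(u (g * s⁻¹) - u g) by ring, norm_neg]

theorem MemDp.sub {p : ℝ} (hp : 1 ≤ p) {S : Finset G} {u v : G → ℂ}
    (hu : MemDp p S u) (hv : MemDp p S v) : MemDp p S (u - v) := by
  have := hu.add hp hv.neg
  rwa [← sub_eq_add_neg] at this

/-! ### `dirSum` and `qNorm` lemmas -/

theorem dirSum_nonneg {p : ℝ} {S : Finset G} {f : G → ℂ} : 0 ≤ dirSum p S f :=
  Finset.sum_nonneg fun _ _ => tsum_nonneg fun _ => Real.rpow_nonneg (norm_nonneg _) _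

theorem summable_pair {p : ℝ} {S : Finset G} {f : G → ℂ} (hf : MemDp p S f) :
    Summable fun x : {s // s ∈ S} × G => dpTerm p f x.1 x.2 := by
  apply (summable_prod_of_nonneg fun x => Real.rpow_nonneg (norm_nonneg _) _).mpr
  exact ⟨fun s => hf s s.2, Summable.of_finite⟩

theorem dirSum_eq_tsum {p : ℝ} {S : Finset G} {f : G → ℂ} (hf : MemDp p S f) :
    dirSum p S f = ∑' x : {s // s ∈ S} × G, dpTerm p f x.1 x.2 := by
  rw [Summable.tsum_prod' (summable_pair hf) fun s => hf s s.2]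
  rw [tsum_fintype]
  rw [dirSum, ← Finset.sum_coe_sort]

theorem qNorm_add_le {p : ℝ} (hp : 1 ≤ p) {S : Finset G} {u v : G → ℂ}
    (hu : MemDp p S u) (hv : MemDp p S v) :
    qNorm p S (u + v) ≤ qNorm p S u + qNorm p S v := by
  unfold qNorm
  rw [dirSum_eq_tsum (hu.add hp hv), dirSum_eq_tsum hu, dirSum_eq_tsum hv]
  have hA : Summable fun x : {s // s ∈ S} × G => ‖u (x.2 * (x.1 : G)⁻¹) - u x.2‖ ^ p :=
    summable_pair hu
  have hB : Summable fun x : {s // s ∈ S} × G => ‖v (x.2 * (x.1 : G)⁻¹) - v x.2‖ ^ p :=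
    summable_pair hv
  have key := tsum_norm_add_le hp hA hB
  have e1 : (fun x : {s // s ∈ S} × G => dpTerm p (u + v) x.1 x.2) =
      fun x => ‖(u (x.2 * (x.1 : G)⁻¹) - u x.2) + (v (x.2 * (x.1 : G)⁻¹) - v x.2)‖ ^ p := by
    funext x
    simp only [dpTerm, Pi.add_apply]
    congr 2
    ring
  rw [e1]
  exact key

theorem qNorm_lt_of_dirSum_lt {p : ℝ} (hp : 1 < p) {S : Finset G} {v : G → ℂ} {δ : ℝ}
    (hδ : 0 < δ) (hd : dirSum p S v < δ ^ p) : qNorm p S v < δ := by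
  have hp0 : p ≠ 0 := by linarith
  have h := Real.rpow_lt_rpow dirSum_nonneg hd (by positivity : (0:ℝ) < 1/p)
  rw [one_div, Real.rpow_rpow_inv hδ.le hp0] at h
  rw [qNorm, one_div]
  exact h

theorem dirSum_le_of_lp {p : ℝ} (hp : 1 < p) {S : Finset G} {h : G → ℂ} (hh : MemLp' p h) :
    dirSum p S h ≤ (S.card : ℝ) * (2 ^ p * ∑' g, ‖h g‖ ^ p) := by
  have hp0 : p ≠ 0 := by linarith
  set N : ℝ := ∑' g, ‖h g‖ ^ p with hN
  have hN0 : 0 ≤ N := tsum_nonneg fun _ => Real.rpow_nonneg (norm_nonneg _) _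
  have hbound : ∀ s ∈ S, ∑' g, dpTerm p h s g ≤ 2 ^ p * N := by
    intro s _
    have h1 : Summable fun g => ‖h (g * s⁻¹)‖ ^ p := summable_translate hh s⁻¹
    have h2 : Summable fun g => ‖(-(h g) : ℂ)‖ ^ p := by
      have : (fun g : G => ‖(-(h g) : ℂ)‖ ^ p) = fun g => ‖h g‖ ^ p := by funext g; simp
      rw [this]; exact hh
    have key := tsum_norm_add_le hp.le h1 h2
    have eA : ∑' g, ‖h (g * s⁻¹)‖ ^ p = N := tsum_translate (fun g => ‖h g‖ ^ p) s⁻¹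
    have eB : ∑' g, ‖(-(h g) : ℂ)‖ ^ p = N := by
      rw [hN]; congr 1; funext g; simp
    rw [eA, eB] at key
    have eT : (fun g => ‖h (g * s⁻¹) + -h g‖ ^ p) = fun g => dpTerm p h s g := by
      funext g; rw [dpTerm, sub_eq_add_neg]
    rw [eT] at key
    set T : ℝ := ∑' g, dpTerm p h s g with hT
    have hT0 : 0 ≤ T := tsum_nonneg fun _ => Real.rpow_nonneg (norm_nonneg _) _
    have hTle : T ^ (1/p) ≤ 2 * N ^ (1/p) := by
      rw [two_mul]; exact key
    calc T = (T ^ (1/p)) ^ p := by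
            rw [one_div, Real.rpow_inv_rpow hT0 hp0]
      _ ≤ (2 * N ^ (1/p)) ^ p := by
            apply Real.rpow_le_rpow (Real.rpow_nonneg hT0 _) hTle (by linarith)
      _ = 2 ^ p * N := by
            rw [Real.mul_rpow (by norm_num) (Real.rpow_nonneg hN0 _), one_div,
              Real.rpow_inv_rpow hN0 hp0]
  calc dirSum p S h ≤ ∑ _s ∈ S, 2 ^ p * N := Finset.sum_le_sum hbound
    _ = (S.card : ℝ) * (2 ^ p * N) := by rw [Finset.sum_const, nsmul_eq_mul]

/-! ### Translates of `D_p` functions have differences in `ℓ^p` -/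

theorem translate_list_prod_lp {p : ℝ} (hp : 1 < p) {S : Finset G} {h : G → ℂ}
    (hh : MemDp p S h) : ∀ l : List G, (∀ a ∈ l, a ∈ S) →
      MemLp' p (translateFun h l.prod - h) := by
  intro l
  induction l with
  | nil =>
    intro _
    have : translateFun h ([] : List G).prod - h = 0 := by
      funext g; simp [translateFun]
    rw [this]; exact memLp'_zero (lt_trans one_pos hp)
  | cons a t ih =>
    intro hmem
    have ha : a ∈ S := hmem a List.mem_cons_self
    have ht : ∀ b ∈ t, b ∈ S := fun b hb => hmem b (List.mem_cons_of_mem a hb)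
    rw [List.prod_cons]
    set w : G := t.prod with hw
    have hdecomp : translateFun h (a * w) - h =
        (translateFun h (a * w) - translateFun h w) + (translateFun h w - h) := by
      funext g; simp only [Pi.sub_apply, Pi.add_apply]; ring
    rw [hdecomp]
    refine MemLp'.add hp.le ?_ (ih ht)
    have hsum : Summable fun g => dpTerm p h a (g * w⁻¹) :=
      summable_translate (hh a ha) w⁻¹
    apply hsum.congr
    intro g
    simp only [dpTerm, Pi.sub_apply, translateFun, mul_inv_rev, mul_assoc]

theorem translate_sub_lp {p : ℝ} (hp : 1 < p) {S : Finset G} (hS : SymmGen S)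
    {h : G → ℂ} (hh : MemDp p S h) (x : G) : MemLp' p (translateFun h x - h) := by
  have hx : x ∈ Subgroup.closure (S : Set G) := hS.2 ▸ Subgroup.mem_top x
  have hx' : x ∈ Submonoid.closure ((S : Set G) ∪ (S : Set G)⁻¹) := by
    rw [← Subgroup.closure_toSubmonoid]
    exact hx
  obtain ⟨l, hl, hlp⟩ := Submonoid.exists_list_of_mem_closure hx'
  have hl' : ∀ a ∈ l, a ∈ S := by
    intro a ha
    rcases hl a ha with h1 | h1
    · exact h1
    · have h2 : a⁻¹ ∈ S := by simpa using h1
      have := hS.1 a⁻¹ h2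
      simpa using this
  rw [← hlp]
  exact translate_list_prod_lp hp hh l hl'

/-! ### Truncation in `ℓ^p` -/

theorem exists_trunc {p : ℝ} (hp : 0 < p) {h : G → ℂ} (hh : MemLp' p h) {δ : ℝ} (hδ : 0 < δ) :
    ∃ (F : Finset G) (h' : G → ℂ), (∀ g, h' g ≠ 0 → g ∈ F) ∧ MemLp' p h' ∧
      (∑' g, ‖(h - h') g‖ ^ p) < δ := by
  classical
  set f : G → ℝ := fun g => ‖h g‖ ^ p with hf
  have hf0 : ∀ g, 0 ≤ f g := fun g => Real.rpow_nonneg (norm_nonneg _) _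
  set L : ℝ := ∑' g, f g with hL
  have hhs : HasSum f L := hh.hasSum
  have hev : ∀ᶠ F in (Filter.atTop : Filter (Finset G)), L - δ < ∑ g ∈ F, f g :=
    hhs.eventually (eventually_gt_nhds (by linarith))
  obtain ⟨F, hF⟩ := hev.exists
  refine ⟨F, fun g => if g ∈ F then h g else 0, ?_, ?_, ?_⟩
  · intro g hg
    by_contra hgF
    simp [hgF] at hg
  · apply summable_of_ne_finset_zero (s := F)
    intro g hg
    simp [hg, Real.zero_rpow hp.ne']
  · have he : (fun g => ‖(h - fun g => if g ∈ F then h g else 0) g‖ ^ p) =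
        fun g => if g ∈ F then 0 else f g := by
      funext g
      by_cases hg : g ∈ F <;> simp [hg, Real.zero_rpow hp.ne', hf]
    rw [he]
    set u : G → ℝ := fun g => if g ∈ F then f g else 0 with hu
    have hus : Summable u := by
      apply summable_of_ne_finset_zero (s := F)
      intro g hg
      simp [hu, hg]
    have hvs : Summable fun g => if g ∈ F then 0 else f g := by
      refine Summable.of_nonneg_of_le (f := f) (fun g => ?_) (fun g => ?_) hhs.summable
      · by_cases hg : g ∈ F <;> simp [hg, hf0 g]
      · by_cases hg : g ∈ F <;> simp [hg, hf0 g]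
    have hsplit : ∀ g, (if g ∈ F then (0:ℝ) else f g) = f g - u g := by
      intro g; by_cases hg : g ∈ F <;> simp [hu, hg]
    have htsum : ∑' g, (if g ∈ F then (0:ℝ) else f g) = L - ∑' g, u g := by
      rw [tsum_congr hsplit, Summable.tsum_sub hh hus]
    have huval : ∑' g, u g = ∑ g ∈ F, f g := by
      rw [tsum_eq_sum (s := F) (fun g hg => by simp [hu, hg])]
      exact Finset.sum_congr rfl fun g hg => by simp [hu, hg]
    rw [htsum, huval]
    linarith

/-! ### Separated translates -/

theorem exists_sep [Infinite G] (F : Finset G) (n : ℕ) :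
    ∃ xs : Fin n → G, ∀ i j : Fin n, ∀ a ∈ F, ∀ b ∈ F, a * xs i = b * xs j → i = j := by
  classical
  induction n with
  | zero => exact ⟨fun i => 1, fun i => i.elim0⟩
  | succ n ih =>
    obtain ⟨xs, hxs⟩ := ih
    set bad : Finset G := F.biUnion fun a => F.biUnion fun b =>
      (Finset.univ : Finset (Fin n)).image fun j => a⁻¹ * (b * xs j) with hbad
    obtain ⟨x, hx⟩ := Infinite.exists_notMem_finset bad
    refine ⟨Fin.cons x xs, ?_⟩
    intro i j a ha b hb hab
    have hmem : ∀ (c d : G), c ∈ F → d ∈ F → ∀ k : Fin n, c * x = d * xs k → False := by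
      intro c d hc hd k hcd
      apply hx
      rw [hbad]
      apply Finset.mem_biUnion.mpr
      refine ⟨c, hc, ?_⟩
      apply Finset.mem_biUnion.mpr
      refine ⟨d, hd, ?_⟩
      apply Finset.mem_image.mpr
      refine ⟨k, Finset.mem_univ k, ?_⟩
      rw [← hcd]
      group
    induction i using Fin.cases with
    | zero =>
      induction j using Fin.cases with
      | zero => rfl
      | succ j' =>
        rw [Fin.cons_zero, Fin.cons_succ] at hab
        exact absurd hab (fun hc => hmem a b ha hb j' hc)
    | succ i' =>
      induction j using Fin.cases with
      | zero =>
        rw [Fin.cons_succ, Fin.cons_zero] at hab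
        exact absurd hab.symm (fun hc => hmem b a hb ha i' hc)
      | succ j' =>
        rw [Fin.cons_succ, Fin.cons_succ] at hab
        exact congrArg Fin.succ (hxs i' j' a ha b hb hab)

/-! ### Choice of `n` -/

theorem exists_good_n {p : ℝ} (hp : 1 < p) {N t : ℝ} (hN : 0 ≤ N) (ht : 0 < t) :
    ∃ n : ℕ, 1 ≤ (n : ℝ) ∧ (n : ℝ) * ((n : ℝ)⁻¹) ^ p * N < t := by
  obtain ⟨n, hn⟩ := exists_nat_gt (max 1 ((N / t) ^ (1 / (p - 1))))
  have h1 : (1 : ℝ) ≤ n := le_of_lt (lt_of_le_of_lt (le_max_left _ _) hn)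
  have hn0 : (0 : ℝ) < n := by linarith
  refine ⟨n, h1, ?_⟩
  have hd : 0 ≤ N / t := div_nonneg hN ht.le
  have hp1 : (0 : ℝ) < p - 1 := by linarith
  have hkey : N / t < (n : ℝ) ^ (p - 1) := by
    have h2 : (N / t) ^ (1 / (p - 1)) < (n : ℝ) := lt_of_le_of_lt (le_max_right _ _) hn
    have h3 := Real.rpow_lt_rpow (Real.rpow_nonneg hd _) h2 hp1
    rwa [← Real.rpow_mul hd, one_div, inv_mul_cancel₀ hp1.ne', Real.rpow_one] at h3
  have heq : (n : ℝ) * ((n : ℝ)⁻¹) ^ p * N = N / (n : ℝ) ^ (p - 1) := by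
    rw [Real.inv_rpow hn0.le, Real.rpow_sub hn0, Real.rpow_one]
    field_simp
  rw [heq]
  rw [div_lt_iff₀ (Real.rpow_pos_of_pos hn0 _)]
  calc N < (n : ℝ) ^ (p - 1) * t := by
        have := (div_lt_iff₀ ht).mp hkey
        linarith
    _ = t * (n : ℝ) ^ (p - 1) := mul_comm _ _

end PHB


open PHB

/-- in `D_p(G)/ℂ`, the closure of `Diff(D_p(G)/ℂ)` equals the
closure of `ℓ^p(G)`. -/
theorem closDiff_eq_closLp {G : Type*} [Group G] [Infinite G] (S : Finset G)
    (hS : PHB.SymmGen S) (p : ℝ) (hp : 1 < p) :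
    ∀ f : G → ℂ, PHB.MemDp p S f →
      (PHB.InClosDiffQ p S f ↔ PHB.InClosLpQ p S f) := by
  intro f hf
  have hp0 : (0:ℝ) < p := lt_trans one_pos hp
  constructor
  · -- Diff closure ⊆ ℓ^p closure: every element of Diff(D_p) is itself in ℓ^p
    intro hD ε hε
    obtain ⟨n, cc, hs, xs, hmem, hq⟩ := hD ε hε
    exact ⟨∑ i, cc i • (translateFun (hs i) (xs i) - hs i),
      memLp'_sum hp Finset.univ _ (fun i _ =>
        MemLp'.smul _ (translate_sub_lp hp hS (hmem i) (xs i))), hq⟩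
  · -- ℓ^p closure ⊆ Diff closure
    intro hL ε hε
    obtain ⟨h, hhlp, hq⟩ := hL (ε/3) (by linarith)
    set C : ℝ := (S.card : ℝ) * 2 ^ p + 1 with hC
    have hC0 : (0:ℝ) < C := by positivity
    have hε3 : (0:ℝ) < ε/3 := by linarith
    have hεp : (0:ℝ) < (ε/3) ^ p := Real.rpow_pos_of_pos hε3 p
    set t : ℝ := (ε/3) ^ p / C with ht
    have ht0 : 0 < t := by positivity
    obtain ⟨F, h', hsupp, h'lp, htail⟩ := exists_trunc hp0 hhlp ht0
    set N' : ℝ := ∑' g, ‖h' g‖ ^ p with hN'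
    have hN'0 : 0 ≤ N' := tsum_nonneg fun _ => Real.rpow_nonneg (norm_nonneg _) _
    obtain ⟨n, hn1, hnb⟩ := exists_good_n hp hN'0 ht0
    obtain ⟨xs, hxs⟩ := exists_sep F n
    set e : G → ℂ := ((n:ℂ))⁻¹ • ∑ k : Fin n, translateFun h' (xs k) with he
    have key : ∀ g : G, ‖e g‖ ^ p ≤ ∑ k : Fin n, ((n:ℝ)⁻¹) ^ p * ‖h' (g * (xs k)⁻¹)‖ ^ p := by
      intro g
      have heg : e g = (n:ℂ)⁻¹ * ∑ k : Fin n, h' (g * (xs k)⁻¹) := by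
        simp [he, translateFun, Finset.sum_apply]
      by_cases hcase : ∃ k0 : Fin n, h' (g * (xs k0)⁻¹) ≠ 0
      · obtain ⟨k0, hk0⟩ := hcase
        have hsum : ∑ k : Fin n, h' (g * (xs k)⁻¹) = h' (g * (xs k0)⁻¹) := by
          apply Finset.sum_eq_single k0
          · intro k _ hkne
            by_contra hne
            apply hkne
            apply hxs k k0 (g * (xs k)⁻¹) (hsupp _ hne) (g * (xs k0)⁻¹) (hsupp _ hk0)
            group
          · intro hk; exact absurd (Finset.mem_univ _) hk
        rw [heg, hsum, norm_mul, Real.mul_rpow (norm_nonneg _) (norm_nonneg _)]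
        have hterm : ‖((n:ℂ))⁻¹‖ ^ p = ((n:ℝ)⁻¹) ^ p := by
          congr 1
          rw [norm_inv, Complex.norm_natCast]
        rw [hterm]
        exact Finset.single_le_sum (f := fun k => ((n:ℝ)⁻¹)^p * ‖h' (g * (xs k)⁻¹)‖^p)
          (fun k _ => mul_nonneg (Real.rpow_nonneg (by positivity) _)
            (Real.rpow_nonneg (norm_nonneg _) _)) (Finset.mem_univ k0)
      · push_neg at hcase
        have hz : e g = 0 := by
          rw [heg, Finset.sum_eq_zero (fun k _ => hcase k), mul_zero]
        rw [hz]
        rw [norm_zero, Real.zero_rpow hp0.ne']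
        exact Finset.sum_nonneg fun k _ => mul_nonneg (Real.rpow_nonneg (by positivity) _)
          (Real.rpow_nonneg (norm_nonneg _) _)
    have hRHS : Summable fun g => ∑ k : Fin n, ((n:ℝ)⁻¹) ^ p * ‖h' (g * (xs k)⁻¹)‖ ^ p :=
      summable_sum fun k _ => (summable_translate h'lp (xs k)⁻¹).mul_left _
    have help : MemLp' p e :=
      Summable.of_nonneg_of_le (fun g => Real.rpow_nonneg (norm_nonneg _) _) key hRHS
    have hebound : ∑' g, ‖e g‖ ^ p < t := by
      have h1 : ∑' g, ‖e g‖ ^ p ≤ ∑' g, ∑ k : Fin n, ((n:ℝ)⁻¹) ^ p * ‖h' (g * (xs k)⁻¹)‖ ^ p :=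
        Summable.tsum_le_tsum key help hRHS
      have h2 : ∑' g, ∑ k : Fin n, ((n:ℝ)⁻¹)^p * ‖h' (g*(xs k)⁻¹)‖^p
          = ∑ k : Fin n, ((n:ℝ)⁻¹)^p * N' := by
        rw [Summable.tsum_finsetSum (fun k _ => (summable_translate h'lp (xs k)⁻¹).mul_left _)]
        apply Finset.sum_congr rfl
        intro k _
        rw [tsum_mul_left]
        congr 1
        exact tsum_translate (fun g => ‖h' g‖ ^ p) (xs k)⁻¹
      have h3 : ∑ k : Fin n, ((n:ℝ)⁻¹)^p * N' = (n:ℝ) * ((n:ℝ)⁻¹)^p * N' := by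
        rw [Finset.sum_const, Finset.card_univ, Fintype.card_fin, nsmul_eq_mul]; ring
      calc ∑' g, ‖e g‖^p ≤ _ := h1
        _ = _ := h2
        _ = _ := h3
        _ < t := hnb
    have hq_of_lp : ∀ v : G → ℂ, MemLp' p v → (∑' g, ‖v g‖ ^ p) < t → qNorm p S v < ε/3 := by
      intro v hv hvt
      apply qNorm_lt_of_dirSum_lt hp hε3
      have hvt0 : (0:ℝ) ≤ ∑' g, ‖v g‖ ^ p := tsum_nonneg fun _ => Real.rpow_nonneg (norm_nonneg _) _
      calc dirSum p S v ≤ (S.card : ℝ) * (2^p * ∑' g, ‖v g‖^p) := dirSum_le_of_lp hp hv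
        _ = ((S.card:ℝ) * 2^p) * ∑' g, ‖v g‖^p := by ring
        _ ≤ C * ∑' g, ‖v g‖^p := by
            apply mul_le_mul_of_nonneg_right _ hvt0
            rw [hC]; linarith
        _ < C * t := mul_lt_mul_of_pos_left hvt hC0
        _ = (ε/3)^p := by rw [ht]; field_simp
    have hmh : MemDp p S h := MemDp.of_lp hp.le hhlp
    have hm1 : MemDp p S (f - h) := MemDp.sub hp.le hf hmh
    have hm2 : MemDp p S (h - h') := MemDp.of_lp hp.le (MemLp'.sub hp.le hhlp h'lp)
    have hm3 : MemDp p S e := MemDp.of_lp hp.le help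
    refine ⟨n, fun _ => -((n:ℂ)⁻¹), fun _ => h', xs, fun i => MemDp.of_lp hp.le h'lp, ?_⟩
    have hnC : (n:ℂ) ≠ 0 := by
      have hne : (n:ℝ) ≠ 0 := by linarith
      exact_mod_cast hne
    have hfun : f - ∑ i : Fin n, (-((n:ℂ)⁻¹)) • (translateFun h' (xs i) - h')
        = (f - h) + ((h - h') + e) := by
      funext g
      simp only [Pi.sub_apply, Pi.add_apply, Finset.sum_apply, Pi.smul_apply, smul_eq_mul,
        translateFun, he]
      have hstep : ∀ i : Fin n, (-((n:ℂ)⁻¹)) * (h' (g * (xs i)⁻¹) - h' g)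
          = (n:ℂ)⁻¹ * h' g - (n:ℂ)⁻¹ * h' (g * (xs i)⁻¹) := fun i => by ring
      rw [Finset.sum_congr rfl fun i _ => hstep i, Finset.sum_sub_distrib, Finset.sum_const,
        Finset.card_univ, Fintype.card_fin, ← Finset.mul_sum, nsmul_eq_mul]
      field_simp
      ring
    rw [hfun]
    have t1 : qNorm p S ((f-h) + ((h-h') + e)) ≤ qNorm p S (f-h) + qNorm p S ((h-h')+e) :=
      qNorm_add_le hp.le hm1 (MemDp.add hp.le hm2 hm3)
    have t2 : qNorm p S ((h-h') + e) ≤ qNorm p S (h-h') + qNorm p S e :=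
      qNorm_add_le hp.le hm2 hm3
    have q2 := hq_of_lp (h - h') (MemLp'.sub hp.le hhlp h'lp) htail
    have q3 := hq_of_lp e help hebound
    linarith
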